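/- Let n, p, e be natural numbers, Q an n×n real diagonal matrix with strictly positive diagonal entries, P an n×n real symmetric positive definite matrix, A_b an n×n real matrix, B an n×p real matrix with Q·P·B = B, σ > 0, and E a p×e real matrix. Let R₁, R₂ : Fin e → ℝ satisfy 0 < R₂ l ≤ R₁ l for every l, and set 𝓛ᵢ := E·diag(Rᵢ)⁻¹·Eᵀ for i = 1, 2. If Q·P·(A_b − B·𝓛₁·Bᵀ) + (A_b − B·𝓛₁·Bᵀ)ᵀ·P·Q + σ·B·Bᵀ is negative semidefinite, then Q·P·(A_b − B·𝓛₂·Bᵀ) + (A_b − B·𝓛₂·Bᵀ)ᵀ·P·Q + σ·B·Bᵀ is also negative semidefinite. (Lowering the line resistances of a cluster preserves its verified output strict equilibrium-independent passivity.) -/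
import Mathlib


open Matrix

lemma quad_diag_nonpos {n e : ℕ} (N : Matrix (Fin n) (Fin e) ℝ) (c : Fin e → ℝ)
    (hc : ∀ l, c l ≤ 0) (x : Fin n → ℝ) :
    x ⬝ᵥ (N * Matrix.diagonal c * Nᵀ).mulVec x ≤ 0 := by
  rw [← Matrix.mulVec_mulVec, ← Matrix.mulVec_mulVec, Matrix.dotProduct_mulVec]
  have hy : Nᵀ.mulVec x = N.vecMul x := by
    ext i; simp [Matrix.mulVec, Matrix.vecMul, dotProduct, mul_comm]
  rw [hy]
  simp only [dotProduct, Matrix.mulVec_diagonal]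
  apply Finset.sum_nonpos
  intro l _
  have := hc l
  nlinarith [sq_nonneg (N.vecMul x l)]

/-- Corollary 1: lowering the line resistances of a cluster preserves its
verified reduced-order OS-EIP LMI. -/
theorem lowering_line_resistances_preserves_OSEIP
    (n p e : ℕ) (d : Fin n → ℝ) (hd : ∀ i, 0 < d i)
    (Q : Matrix (Fin n) (Fin n) ℝ) (hQ : Q = Matrix.diagonal d)
    (P : Matrix (Fin n) (Fin n) ℝ) (hP : P.PosDef)
    (Ab : Matrix (Fin n) (Fin n) ℝ) (B : Matrix (Fin n) (Fin p) ℝ)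
    (hQPB : Q * P * B = B) (σ : ℝ) (hσ : 0 < σ)
    (E : Matrix (Fin p) (Fin e) ℝ)
    (R₁ R₂ : Fin e → ℝ) (hR : ∀ l, 0 < R₂ l ∧ R₂ l ≤ R₁ l)
    (L₁ L₂ : Matrix (Fin p) (Fin p) ℝ)
    (hL₁ : L₁ = E * (Matrix.diagonal R₁)⁻¹ * Eᵀ)
    (hL₂ : L₂ = E * (Matrix.diagonal R₂)⁻¹ * Eᵀ)
    (hLMI₁ : ∀ x : Fin n → ℝ,
      x ⬝ᵥ (Q * P * (Ab - B * L₁ * Bᵀ) + (Ab - B * L₁ * Bᵀ)ᵀ * P * Q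
              + σ • (B * Bᵀ)).mulVec x ≤ 0) :
    ∀ x : Fin n → ℝ,
      x ⬝ᵥ (Q * P * (Ab - B * L₂ * Bᵀ) + (Ab - B * L₂ * Bᵀ)ᵀ * P * Q
              + σ • (B * Bᵀ)).mulVec x ≤ 0 := by
  intro x
  -- basic symmetry facts
  have hPt : Pᵀ = P := hP.isHermitian.eq
  have hQt : Qᵀ = Q := by rw [hQ]; exact Matrix.diagonal_transpose d
  have hBtPQ : Bᵀ * P * Q = Bᵀ := by
    have := congrArg Matrix.transpose hQPB
    simpa [Matrix.transpose_mul, hPt, hQt, Matrix.mul_assoc] using this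
  -- resistances positive
  have hR₁pos : ∀ l, 0 < R₁ l := fun l => lt_of_lt_of_le (hR l).1 (hR l).2
  -- diagonal inverses
  have hinv : ∀ (R : Fin e → ℝ), (∀ l, 0 < R l) →
      (Matrix.diagonal R)⁻¹ = Matrix.diagonal (fun l => (R l)⁻¹) := by
    intro R hRpos
    have h1 : Matrix.diagonal R * Matrix.diagonal (fun l => (R l)⁻¹) = 1 := by
      rw [Matrix.diagonal_mul_diagonal,
        show (fun i => R i * (R i)⁻¹) = fun _ => (1 : ℝ) from
          funext fun l => mul_inv_cancel₀ (ne_of_gt (hRpos l)), Matrix.diagonal_one]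
    exact Matrix.inv_eq_right_inv h1
  set c : Fin e → ℝ := fun l => (R₁ l)⁻¹ - (R₂ l)⁻¹ with hc
  have hcle : ∀ l, c l ≤ 0 := by
    intro l
    have h1 := (hR l).1
    have h2 := (hR l).2
    have : (R₁ l)⁻¹ ≤ (R₂ l)⁻¹ := one_div (R₁ l) ▸ one_div (R₂ l) ▸
      one_div_le_one_div_of_le h1 h2
    simp [hc]; linarith
  have hLdiff : L₁ - L₂ = E * Matrix.diagonal c * Eᵀ := by
    have hdc : Matrix.diagonal c = Matrix.diagonal (fun l => (R₁ l)⁻¹)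
        - Matrix.diagonal (fun l => (R₂ l)⁻¹) := by
      rw [← Matrix.diagonal_sub]
    rw [hL₁, hL₂, hinv R₁ hR₁pos, hinv R₂ (fun l => (hR l).1), hdc,
      Matrix.mul_sub, Matrix.sub_mul]
  -- key algebra
  have h1 : ∀ L : Matrix (Fin p) (Fin p) ℝ, Q * P * (B * L * Bᵀ) = B * L * Bᵀ := by
    intro L
    rw [← Matrix.mul_assoc, ← Matrix.mul_assoc, hQPB]
  have h2 : ∀ L : Matrix (Fin p) (Fin p) ℝ, (B * L * Bᵀ)ᵀ * P * Q = B * Lᵀ * Bᵀ := by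
    intro L
    calc (B * L * Bᵀ)ᵀ * P * Q = B * Lᵀ * (Bᵀ * P * Q) := by
          simp [Matrix.transpose_mul, Matrix.mul_assoc]
      _ = B * Lᵀ * Bᵀ := by rw [hBtPQ]
  have hkey : Q * P * (Ab - B * L₂ * Bᵀ) + (Ab - B * L₂ * Bᵀ)ᵀ * P * Q + σ • (B * Bᵀ)
      = (Q * P * (Ab - B * L₁ * Bᵀ) + (Ab - B * L₁ * Bᵀ)ᵀ * P * Q + σ • (B * Bᵀ))
        + (B * (L₁ - L₂) * Bᵀ) + (B * (L₁ - L₂)ᵀ * Bᵀ) := by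
    simp only [Matrix.mul_sub, Matrix.transpose_sub, Matrix.sub_mul, h1, h2,
      Matrix.transpose_sub]
    abel
  have hsym : B * (L₁ - L₂) * Bᵀ = (B * E) * Matrix.diagonal c * (B * E)ᵀ := by
    rw [hLdiff]
    simp [Matrix.transpose_mul, Matrix.mul_assoc]
  have hsym' : B * (L₁ - L₂)ᵀ * Bᵀ = (B * E) * Matrix.diagonal c * (B * E)ᵀ := by
    have : (L₁ - L₂)ᵀ = L₁ - L₂ := by
      rw [hLdiff]
      simp [Matrix.transpose_mul, Matrix.diagonal_transpose, Matrix.mul_assoc]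
    rw [this, hsym]
  rw [hkey, hsym, hsym']
  have hq := quad_diag_nonpos (B * E) c hcle x
  have h0 := hLMI₁ x
  simp only [Matrix.add_mulVec, dotProduct_add] at h0 ⊢
  linarith
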